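/- For all x > 0, (3x + √(x²+4))/4 < 1/V_0(x) < (2x + √(x²+3))/3; equivalently g_3(x) < V_0(x) < g_4(x) where g_k(x) = k/((k−1)x + √(x²+k)). -/

import Mathlib

open Real MeasureTheory Set Filter Topology

noncomputable def V0 (x : ℝ) : ℝ := 2 * Real.exp (x^2) * ∫ t in Set.Ioi x, Real.exp (-t^2)

noncomputable def g (k : ℝ) (x : ℝ) : ℝ := k / ((k-1)*x + Real.sqrt (x^2 + k))

namespace NuBounds

noncomputable def F (x : ℝ) : ℝ := ∫ t in Set.Ioi x, Real.exp (-t^2)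

lemma gauss_integrable : Integrable (fun t : ℝ => Real.exp (-t^2)) := by
  simpa using integrable_exp_neg_mul_sq (b := 1) one_pos

lemma gauss_cont : Continuous (fun t : ℝ => Real.exp (-t^2)) := by continuity

lemma F_split {a b : ℝ} (h : a ≤ b) :
    F a = (∫ t in Set.Ioc a b, Real.exp (-t^2)) + F b := by
  rw [F, F, ← MeasureTheory.setIntegral_union (Set.Ioc_disjoint_Ioi le_rfl) measurableSet_Ioi
    gauss_integrable.integrableOn gauss_integrable.integrableOn,
    Set.Ioc_union_Ioi_eq_Ioi h]

lemma F_eq (x : ℝ) : F x = F 0 - ∫ t in (0:ℝ)..x, Real.exp (-t^2) := by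
  rcases le_total 0 x with h | h
  · rw [intervalIntegral.integral_of_le h]
    have := F_split h
    linarith
  · rw [intervalIntegral.integral_of_ge h]
    have := F_split h
    linarith

lemma F_hasDeriv (x : ℝ) : HasDerivAt F (-Real.exp (-x^2)) x := by
  have h1 : HasDerivAt (fun y => ∫ t in (0:ℝ)..y, Real.exp (-t^2)) (Real.exp (-x^2)) x :=
    (gauss_cont.integral_hasStrictDerivAt 0 x).hasDerivAt
  have h2 : HasDerivAt (fun y => F 0 - ∫ t in (0:ℝ)..y, Real.exp (-t^2)) (-Real.exp (-x^2)) x := by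
    exact h1.const_sub (F 0)
  have hF : F = fun y => F 0 - ∫ t in (0:ℝ)..y, Real.exp (-t^2) := funext fun y => by
    rw [F_eq y]
  rw [hF]
  exact h2

lemma F_tendsto : Tendsto F atTop (𝓝 0) := by
  have h1 : Tendsto (fun y : ℝ => ∫ t in (0:ℝ)..y, Real.exp (-t^2)) atTop (𝓝 (F 0)) :=
    intervalIntegral_tendsto_integral_Ioi 0 gauss_integrable.integrableOn tendsto_id
  have h2 : Tendsto (fun y : ℝ => F 0 - ∫ t in (0:ℝ)..y, Real.exp (-t^2)) atTop (𝓝 (F 0 - F 0)) :=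
    tendsto_const_nhds.sub h1
  simp only [sub_self] at h2
  exact h2.congr fun y => (F_eq y).symm

/-- derivative of g k -/
noncomputable def gd (k x : ℝ) : ℝ :=
  -(k * ((k-1) + x / Real.sqrt (x^2+k))) / ((k-1)*x + Real.sqrt (x^2+k))^2

lemma u_pos {k x : ℝ} (hk : 1 ≤ k) (hx : 0 < x) : 0 < (k-1)*x + Real.sqrt (x^2+k) := by
  have h1 : 0 < Real.sqrt (x^2+k) := Real.sqrt_pos.2 (by positivity)
  have h2 : 0 ≤ (k-1)*x := mul_nonneg (by linarith) hx.le
  linarith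

lemma g_pos {k x : ℝ} (hk : 1 ≤ k) (hx : 0 < x) : 0 < g k x :=
  div_pos (by linarith) (u_pos hk hx)

lemma g_hasDeriv {k x : ℝ} (hk : 1 ≤ k) (hx : 0 < x) :
    HasDerivAt (g k) (gd k x) x := by
  have hks : 0 < x^2 + k := by positivity
  have hspos : 0 < Real.sqrt (x^2+k) := Real.sqrt_pos.2 hks
  have hs : HasDerivAt (fun y : ℝ => Real.sqrt (y^2+k)) (x / Real.sqrt (x^2+k)) x := by
    have h1 : HasDerivAt (fun y : ℝ => y^2 + k) (2*x) x := by
      simpa using ((hasDerivAt_pow 2 x).add_const k)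
    have h2 := (Real.hasDerivAt_sqrt (ne_of_gt hks)).comp x h1
    exact h2.congr_deriv (by field_simp)
  have hu : HasDerivAt (fun y => (k-1)*y + Real.sqrt (y^2+k)) ((k-1) + x / Real.sqrt (x^2+k)) x := by
    have := ((hasDerivAt_id x).const_mul (k-1)).add hs
    exact this.congr_deriv (by ring)
  have hune : (k-1)*x + Real.sqrt (x^2+k) ≠ 0 := ne_of_gt (u_pos hk hx)
  have hdiv := (hasDerivAt_const x k).div hu hune
  have hg : g k = fun y => k / ((k-1)*y + Real.sqrt (y^2+k)) := rfl
  rw [hg, gd]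
  exact hdiv.congr_deriv (by ring)

noncomputable def D (k x : ℝ) : ℝ := Real.exp (-x^2) * g k x / 2 - F x

lemma D_hasDeriv {k x : ℝ} (hk : 1 ≤ k) (hx : 0 < x) :
    HasDerivAt (D k) (Real.exp (-x^2) * (gd k x / 2 - x * g k x + 1)) x := by
  have hexp : HasDerivAt (fun y : ℝ => Real.exp (-y^2)) (-(2*x) * Real.exp (-x^2)) x := by
    have h1 : HasDerivAt (fun y : ℝ => -y^2) (-(2*x)) x := by
      exact (hasDerivAt_pow 2 x).neg.congr_deriv (by norm_num)
    simpa [mul_comm] using h1.exp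
  have hg := g_hasDeriv hk hx
  have h2 := ((hexp.mul hg).div_const 2).sub (F_hasDeriv x)
  have hD : D k = fun y => Real.exp (-y^2) * g k y / 2 - F y := rfl
  rw [hD]
  exact h2.congr_deriv (by ring)

lemma key4 {x : ℝ} (hx : 0 < x) : gd 4 x / 2 - x * g 4 x + 1 < 0 := by
  simp only [gd, g]
  set s := Real.sqrt (x^2+4) with hsdef
  have hs2 : s^2 = x^2 + 4 := Real.sq_sqrt (by positivity)
  have hspos : 0 < s := Real.sqrt_pos.2 (by positivity)
  have hupos : (0:ℝ) < (4-1)*x + s := by linarith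
  have hkey : 0 < s*(x^2+1) - x*(x^2+3) := by
    have hprod : (s*(x^2+1) - x*(x^2+3)) * (s*(x^2+1) + x*(x^2+3)) = 4 := by
      linear_combination (x^2+1)^2 * hs2
    have hsum : 0 < s*(x^2+1) + x*(x^2+3) := by positivity
    nlinarith [hprod, hsum]
  have expand : -(4*((4-1:ℝ) + x/s)) / (((4-1))*x + s)^2 / 2 - x * (4 / ((4-1)*x + s)) + 1
      = (-(4*((4-1)*s+x)) - 8*x*s*((4-1)*x+s) + 2*s*((4-1)*x+s)^2) / (2*s*((4-1)*x+s)^2) := by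
    field_simp
    ring
  rw [expand]
  apply div_neg_of_neg_of_pos
  · have e2 : x*s^2 = x*(x^2+4) := by rw [hs2]
    have e3 : s^3 = s*(x^2+4) := by rw [pow_succ, hs2]; ring
    nlinarith [hkey, e2, e3]
  · positivity

lemma key3 {x : ℝ} (hx : 0 < x) : 0 < gd 3 x / 2 - x * g 3 x + 1 := by
  simp only [gd, g]
  set s := Real.sqrt (x^2+3) with hsdef
  have hs2 : s^2 = x^2 + 3 := Real.sq_sqrt (by positivity)
  have hspos : 0 < s := Real.sqrt_pos.2 (by positivity)
  have hupos : (0:ℝ) < (3-1)*x + s := by linarith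
  have hkey : 0 < 2*x^2 + 3 - 2*x*s := by
    have hprod : (2*x^2 + 3 - 2*x*s) * (2*x^2 + 3 + 2*x*s) = 9 := by
      linear_combination (-4*x^2) * hs2
    have hsum : 0 < 2*x^2 + 3 + 2*x*s := by positivity
    nlinarith [hprod, hsum]
  have expand : -(3*((3-1:ℝ) + x/s)) / (((3-1))*x + s)^2 / 2 - x * (3 / ((3-1)*x + s)) + 1
      = (-(3*((3-1)*s+x)) - 6*x*s*((3-1)*x+s) + 2*s*((3-1)*x+s)^2) / (2*s*((3-1)*x+s)^2) := by
    field_simp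
    ring
  rw [expand]
  apply div_pos
  · have e2 : x*s^2 = x*(x^2+3) := by rw [hs2]
    have e3 : s^3 = s*(x^2+3) := by rw [pow_succ, hs2]; ring
    nlinarith [hkey, e2, e3, mul_pos hx hkey]
  · positivity

lemma pos_of_deriv_neg {D D' : ℝ → ℝ} {a : ℝ}
    (hd : ∀ y ∈ Set.Ici a, HasDerivAt D (D' y) y)
    (hneg : ∀ y ∈ Set.Ici a, D' y < 0)
    (hlim : Tendsto D atTop (𝓝 0)) : 0 < D a := by
  have hanti : StrictAntiOn D (Set.Ici a) := by
    apply strictAntiOn_of_deriv_neg (convex_Ici a)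
    · exact fun y hy => (hd y hy).continuousAt.continuousWithinAt
    · intro y hy
      rw [interior_Ici] at hy
      rw [(hd y (Set.mem_Ioi.1 hy).le).deriv]
      exact hneg y (Set.mem_Ioi.1 hy).le
  have h1 : D (a+1) < D a :=
    hanti (Set.mem_Ici.2 le_rfl) (Set.mem_Ici.2 (by linarith)) (by linarith)
  have h2 : (0:ℝ) ≤ D (a+1) := by
    apply le_of_tendsto hlim
    filter_upwards [eventually_gt_atTop (a+1)] with y hy
    exact le_of_lt (hanti (Set.mem_Ici.2 (by linarith)) (Set.mem_Ici.2 (by linarith)) hy)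
  linarith

lemma neg_of_deriv_pos {D D' : ℝ → ℝ} {a : ℝ}
    (hd : ∀ y ∈ Set.Ici a, HasDerivAt D (D' y) y)
    (hpos : ∀ y ∈ Set.Ici a, 0 < D' y)
    (hlim : Tendsto D atTop (𝓝 0)) : D a < 0 := by
  have := pos_of_deriv_neg (D := fun y => -(D y)) (D' := fun y => -(D' y)) (a := a)
    (fun y hy => (hd y hy).neg) (fun y hy => neg_neg_iff_pos.2 (hpos y hy))
    (by simpa using hlim.neg)
  simpa using this

lemma expg_tendsto {k : ℝ} (hk : 1 ≤ k) :
    Tendsto (fun y : ℝ => Real.exp (-y^2) * g k y / 2) atTop (𝓝 0) := by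
  apply squeeze_zero' (f := fun y : ℝ => Real.exp (-y^2) * g k y / 2) (g := fun y : ℝ => k / y)
  · filter_upwards [eventually_gt_atTop 0] with y hy
    have := g_pos hk hy
    positivity
  · filter_upwards [eventually_ge_atTop 1] with y hy
    have hy0 : (0:ℝ) < y := by linarith
    have hu := u_pos hk hy0
    have hs : 0 < Real.sqrt (y^2+k) := Real.sqrt_pos.2 (by positivity)
    have h2 : y ≤ (k-1)*y + Real.sqrt (y^2+k) := by
      have hss : Real.sqrt (y^2+k)^2 = y^2 + k := Real.sq_sqrt (by positivity)
      have : y ≤ Real.sqrt (y^2+k) := by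
        nlinarith [Real.sqrt_nonneg (y^2+k), hss]
      nlinarith [mul_nonneg (show (0:ℝ) ≤ k-1 by linarith) hy0.le]
    have hgle : g k y ≤ k / y := by
      rw [g]
      exact div_le_div_of_nonneg_left (by linarith) hy0 h2
    have hexple : Real.exp (-y^2) ≤ 1 := by
      rw [Real.exp_le_one_iff]
      nlinarith
    have hgpos := g_pos hk hy0
    calc Real.exp (-y^2) * g k y / 2 ≤ 1 * g k y / 2 := by
          apply div_le_div_of_nonneg_right ?_ (by norm_num)
          exact mul_le_mul_of_nonneg_right hexple hgpos.le
      _ ≤ g k y := by linarith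
      _ ≤ k / y := hgle
  · exact tendsto_const_nhds.div_atTop tendsto_id

lemma D_tendsto {k : ℝ} (hk : 1 ≤ k) : Tendsto (D k) atTop (𝓝 0) := by
  have := (expg_tendsto hk).sub F_tendsto
  rw [sub_zero] at this
  exact this

lemma F_lt {x : ℝ} (hx : 0 < x) : F x < Real.exp (-x^2) * g 4 x / 2 := by
  have h := pos_of_deriv_neg (D := D 4)
    (D' := fun y => Real.exp (-y^2) * (gd 4 y / 2 - y * g 4 y + 1)) (a := x)
    (fun y hy => D_hasDeriv (by norm_num) (lt_of_lt_of_le hx hy))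
    (fun y hy => by
      have hy0 : 0 < y := lt_of_lt_of_le hx hy
      exact mul_neg_of_pos_of_neg (Real.exp_pos _) (key4 hy0))
    (D_tendsto (by norm_num))
  have : 0 < Real.exp (-x^2) * g 4 x / 2 - F x := h
  linarith

lemma lt_F {x : ℝ} (hx : 0 < x) : Real.exp (-x^2) * g 3 x / 2 < F x := by
  have h := neg_of_deriv_pos (D := D 3)
    (D' := fun y => Real.exp (-y^2) * (gd 3 y / 2 - y * g 3 y + 1)) (a := x)
    (fun y hy => D_hasDeriv (by norm_num) (lt_of_lt_of_le hx hy))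
    (fun y hy => by
      have hy0 : 0 < y := lt_of_lt_of_le hx hy
      exact mul_pos (Real.exp_pos _) (key3 hy0))
    (D_tendsto (by norm_num))
  have : Real.exp (-x^2) * g 3 x / 2 - F x < 0 := h
  linarith

end NuBounds

open NuBounds in
theorem nu_bounds : ∀ x : ℝ, 0 < x →
    ((3*x + Real.sqrt (x^2+4))/4 < 1 / V0 x ∧ 1 / V0 x < (2*x + Real.sqrt (x^2+3))/3) ∧
    (g 3 x < V0 x ∧ V0 x < g 4 x) := by
  intro x hx
  have hV0 : V0 x = 2 * Real.exp (x^2) * F x := rfl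
  have hee : Real.exp (x^2) * Real.exp (-x^2) = 1 := by
    rw [← Real.exp_add]; simp
  have hexppos : (0:ℝ) < Real.exp (x^2) := Real.exp_pos _
  have hlow : g 3 x < V0 x := by
    have h := mul_lt_mul_of_pos_left (lt_F hx) (show (0:ℝ) < 2 * Real.exp (x^2) by positivity)
    calc g 3 x = 2 * Real.exp (x^2) * (Real.exp (-x^2) * g 3 x / 2) := by
          linear_combination (-(g 3 x)) * hee
      _ < 2 * Real.exp (x^2) * F x := h
      _ = V0 x := hV0.symm
  have hupp : V0 x < g 4 x := by
    have h := mul_lt_mul_of_pos_left (F_lt hx) (show (0:ℝ) < 2 * Real.exp (x^2) by positivity)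
    calc V0 x = 2 * Real.exp (x^2) * F x := hV0
      _ < 2 * Real.exp (x^2) * (Real.exp (-x^2) * g 4 x / 2) := h
      _ = g 4 x := by
          linear_combination (g 4 x) * hee
  have hg3pos : 0 < g 3 x := g_pos (by norm_num) hx
  have hg4pos : 0 < g 4 x := g_pos (by norm_num) hx
  have hV0pos : 0 < V0 x := lt_trans hg3pos hlow
  constructor
  · constructor
    · have h1 : 1 / g 4 x < 1 / V0 x := one_div_lt_one_div_of_lt hV0pos hupp
      have h2 : 1 / g 4 x = (3*x + Real.sqrt (x^2+4))/4 := by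
        rw [g, one_div_div]; norm_num
      linarith
    · have h1 : 1 / V0 x < 1 / g 3 x := one_div_lt_one_div_of_lt hg3pos hlow
      have h2 : 1 / g 3 x = (2*x + Real.sqrt (x^2+3))/3 := by
        rw [g, one_div_div]; norm_num
      linarith
  · exact ⟨hlow, hupp⟩
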